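/- Let f : X → Y be a compact-preserving function from a strong Fréchet topological space X to a Hausdorff space Y. Then for each point x ∈ X and each open neighborhood O of f(x) in Y, the set f[x] \ O is finite, where f[x] = {y ∈ Y : x lies in the closure of f⁻¹(y)}. -/

import Mathlib

open Filter Topology Set

def CompactPreserving {X Y : Type*} [TopologicalSpace X] [TopologicalSpace Y]
    (f : X → Y) : Prop := ∀ K : Set X, IsCompact K → IsCompact (f '' K)

/-- A space is strong Fréchet if for every decreasing sequence of sets whose closures all
contain `a`, one can pick points from the sets converging to `a`. -/
def StrongFrechet (X : Type*) [TopologicalSpace X] : Prop :=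
  ∀ (A : ℕ → Set X), (∀ n, A (n + 1) ⊆ A n) → ∀ a : X, (∀ n, a ∈ closure (A n)) →
    ∃ u : ℕ → X, (∀ n, u n ∈ A n) ∧ Filter.Tendsto u Filter.atTop (𝓝 a)

def oscSet {X Y : Type*} [TopologicalSpace X] (f : X → Y) (x : X) : Set Y :=
  {y | x ∈ closure (f ⁻¹' {y})}

theorem stmt1 {X Y : Type*} [TopologicalSpace X] [TopologicalSpace Y]
    [T2Space Y] (hX : StrongFrechet X) (f : X → Y)
    (hf : CompactPreserving f) (x : X) (O : Set Y) (hO : IsOpen O) (hfx : f x ∈ O) :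
    (oscSet f x \ O).Finite := by
  by_contra hinf
  replace hinf : (oscSet f x \ O).Infinite := hinf
  -- pick distinct points y n in oscSet f x \ O
  set e := hinf.natEmbedding
  set y : ℕ → Y := fun n => (e n : Y) with hy
  have hyinj : Function.Injective y := fun a b h => e.injective (Subtype.ext h)
  have hymem : ∀ n, y n ∈ oscSet f x \ O := fun n => (e n).2
  -- decreasing sets
  set A : ℕ → Set X := fun n => ⋃ k, f ⁻¹' {y (n + k)} with hA
  have hAdec : ∀ n, A (n + 1) ⊆ A n := by
    intro n p hp
    obtain ⟨k, hk⟩ := Set.mem_iUnion.1 hp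
    exact Set.mem_iUnion.2 ⟨k + 1, by simpa [Nat.add_assoc, Nat.add_comm 1 k] using hk⟩
  have hAx : ∀ n, x ∈ closure (A n) := by
    intro n
    refine closure_mono (show f ⁻¹' {y n} ⊆ A n from ?_) ((hymem n).1)
    intro p hp
    exact Set.mem_iUnion.2 ⟨0, by simpa using hp⟩
  obtain ⟨u, hu, hulim⟩ := hX A hAdec x hAx
  -- index function g
  have hg : ∀ n, ∃ m, n ≤ m ∧ f (u n) = y m := by
    intro n
    obtain ⟨k, hk⟩ := Set.mem_iUnion.1 (hu n)
    exact ⟨n + k, Nat.le_add_right _ _, hk⟩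
  choose g hgle hgf using hg
  -- T : image set of the sequence f ∘ u
  set T : Set Y := Set.range fun n => f (u n) with hT
  have hTO : ∀ s ∈ T, s ∉ O := by
    rintro s ⟨n, rfl⟩
    show f (u n) ∉ O
    rw [hgf n]; exact (hymem (g n)).2
  have hginf : (Set.range g).Infinite := by
    intro hfin
    obtain ⟨b, hb⟩ := hfin.bddAbove
    exact absurd (hb (Set.mem_range_self (b + 1)))
      (by simpa using Nat.lt_of_lt_of_le (Nat.lt_succ_self b) (hgle (b + 1)))
  have hTinf : T.Infinite := by
    have h1 : (y '' Set.range g).Infinite :=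
      hginf.image (Set.injOn_of_injective hyinj)
    have h2 : y '' Set.range g = T := by
      ext s
      constructor
      · rintro ⟨m, ⟨n, rfl⟩, rfl⟩; exact ⟨n, by simp [hgf n]⟩
      · rintro ⟨n, rfl⟩; exact ⟨g n, ⟨n, rfl⟩, by simp [hgf n]⟩
    rwa [h2] at h1
  -- K compact, so f '' K compact, T ⊆ f '' K
  have hK : IsCompact (insert x (Set.range u)) := hulim.isCompact_insert_range
  have hfK : IsCompact (f '' insert x (Set.range u)) := hf _ hK
  have hTK : T ⊆ f '' insert x (Set.range u) := by
    rintro s ⟨n, rfl⟩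
    exact ⟨u n, Set.mem_insert_of_mem _ ⟨n, rfl⟩, rfl⟩
  -- accumulation point z of T
  obtain ⟨z, -, hz⟩ := hTinf.exists_accPt_of_subset_isCompact hfK hTK
  have hzcl : z ∈ closure (T \ {z}) := by
    rw [accPt_principal_iff_clusterPt] at hz
    exact mem_closure_iff_clusterPt.2 hz
  -- z ∉ O, hence z ≠ f x
  have hzO : z ∉ O := by
    intro hzO
    have : z ∈ closure Oᶜ := closure_mono (fun s hs => hTO s hs.1) hzcl
    rw [hO.isClosed_compl.closure_eq] at this
    exact this hzO
  have hzfx : z ≠ f x := fun h => hzO (h ▸ hfx)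
  -- f (u n) = z only finitely often
  have hfin : {n | f (u n) = z}.Finite := by
    rcases Set.eq_empty_or_nonempty {n | f (u n) = z} with h | ⟨m, hm⟩
    · rw [h]; exact Set.finite_empty
    · refine Set.Finite.subset (Set.finite_Iic (g m)) ?_
      intro n hn
      have : y (g n) = y (g m) := by
        rw [← hgf n, ← hgf m, hn, hm]
      exact (hgle n).trans (hyinj this).le
  obtain ⟨N, hN⟩ : ∃ N, ∀ n ≥ N, f (u n) ≠ z := by
    obtain ⟨N, hN⟩ := hfin.bddAbove
    exact ⟨N + 1, fun n hn h => absurd (hN h) (by omega)⟩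
  -- shifted sequence
  set v : ℕ → X := fun n => u (n + N) with hv
  have hvlim : Tendsto v atTop (𝓝 x) := hulim.comp (tendsto_add_atTop_nat N)
  have hKv : IsCompact (insert x (Set.range v)) := hvlim.isCompact_insert_range
  -- K' : add the finitely many early points with f ≠ z
  set F : Set X := u '' {n | n < N ∧ f (u n) ≠ z} with hF
  have hFfin : F.Finite := ((Set.finite_Iio N).subset (fun n hn => hn.1)).image u
  have hK' : IsCompact (insert x (Set.range v) ∪ F) := hKv.union hFfin.isCompact
  have hfK' : IsCompact (f '' (insert x (Set.range v) ∪ F)) := hf _ hK'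
  -- T \ {z} ⊆ f '' K'
  have hsub : T \ {z} ⊆ f '' (insert x (Set.range v) ∪ F) := by
    rintro s ⟨⟨n, rfl⟩, hs⟩
    simp only [Set.mem_singleton_iff] at hs
    rcases lt_or_ge n N with h | h
    · exact ⟨u n, Or.inr ⟨n, ⟨h, hs⟩, rfl⟩, rfl⟩
    · exact ⟨v (n - N), Or.inl (Set.mem_insert_of_mem _ ⟨n - N, rfl⟩), by
        simp only [hv]; rw [Nat.sub_add_cancel h]⟩
  -- z ∈ f '' K' since it is compact hence closed
  have hzK' : z ∈ f '' (insert x (Set.range v) ∪ F) := by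
    have := closure_mono hsub hzcl
    rwa [hfK'.isClosed.closure_eq] at this
  -- but every element of f '' K' is either f x or in T, ≠ z leads to contradiction
  obtain ⟨p, hp, hpz⟩ := hzK'
  rcases hp with hp | hp
  · rcases hp with rfl | ⟨n, rfl⟩
    · exact hzfx hpz.symm
    · exact hN (n + N) (Nat.le_add_left _ _) hpz
  · obtain ⟨n, ⟨hn1, hn2⟩, rfl⟩ := hp
    exact hn2 hpz
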